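/- Let h(n, n₁, n₂) = 1_{n₁ = n₂ − n} · 1_{|φ(n₁,n₂,n)| ≤ C N₁^{2s+2γ}} · ⟨n₁⟩^{-1} · 1_{|n| ∼ N} · 1_{|n₁| ∼ N₁} · 1_{|n₂| ∼ N₂}, where φ(n₁, n₂, n) = |n₁|² ± |n₂| − |n|², with N₁ ∼ N ≫ N₂ and 2s + 2γ < 1, s, γ ≥ 0. Then the norm of h viewed as an operator from ℓ²_{n₁, n} to ℓ²_{n₂} satisfies ‖h‖_{n₁ n → n₂} ≤ C (N₁^{s+γ−1/2+ε} N₂^{-1/2} + N₁^{-1/2+ε}) for any ε > 0. -/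

import Mathlib

open scoped BigOperators

/-- Euclidean norm of a lattice point in `ℤ²`. -/
noncomputable def en2 (p : ℤ × ℤ) : ℝ :=
  Real.sqrt ((p.1 : ℝ) ^ 2 + (p.2 : ℝ) ^ 2)

/-- Japanese bracket `⟨n⟩` for `n ∈ ℤ²`. -/
noncomputable def jb2 (n : ℤ × ℤ) : ℝ :=
  Real.sqrt (1 + (n.1 : ℝ) ^ 2 + (n.2 : ℝ) ^ 2)

/-- The phase `φ(n₁,n₂,n) = |n₁|² ± |n₂| − |n|²` (sign given by `sgn`). -/
noncomputable def phaseFn (sgn : ℝ) (n₁ n₂ n : ℤ × ℤ) : ℝ :=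
  en2 n₁ ^ 2 + sgn * en2 n₂ - en2 n ^ 2

/-- First deterministic tensor estimate: for the tensor
`h(n,n₁,n₂) = e^{-it|n₁|²} 1_{n₁ = n₂−n} 1_{|φ| ≲ N₁^{2s+2γ}} ⟨n₁⟩^{-1}`
(localized to `|n| ∼ N`, `|n₁| ∼ N₁`, `|n₂| ∼ N₂` with `N₁ ∼ N ≫ N₂` and
`2s + 2γ < 1`), the operator norm `‖h‖_{n₁ n → n₂}` is bounded by
`C (N₁^{s+γ−1/2+ε} N₂^{-1/2} + N₁^{-1/2+ε})`, stated via finitely supported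
inputs and finite partial output sums. -/
lemma count_interval (T : Finset ℤ) (D : ℝ) (hD : 0 ≤ D)
    (hT : ∀ x ∈ T, ∀ y ∈ T, |(x : ℝ) - (y : ℝ)| ≤ D) : (T.card : ℝ) ≤ D + 1 := by
  rcases T.eq_empty_or_nonempty with h | h
  · simp [h]; linarith
  · set x₀ := T.min' h with hx₀
    have hsub : T ⊆ Finset.Icc x₀ (x₀ + ⌊D⌋) := by
      intro x hx
      refine Finset.mem_Icc.2 ⟨T.min'_le x hx, ?_⟩
      have h1 : (x : ℝ) - (x₀ : ℝ) ≤ D := (abs_le.1 (hT x hx x₀ (T.min'_mem h))).2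
      have h2 : x - x₀ ≤ ⌊D⌋ := Int.le_floor.2 (by push_cast; linarith)
      omega
    have hc := Finset.card_le_card hsub
    have hcard : (Finset.Icc x₀ (x₀ + ⌊D⌋)).card = (⌊D⌋ + 1).toNat := by
      rw [Int.card_Icc]; congr 1; ring
    have hfl : (0:ℤ) ≤ ⌊D⌋ := Int.floor_nonneg.2 hD
    calc (T.card : ℝ) ≤ ((⌊D⌋ + 1).toNat : ℝ) := by rw [← hcard]; exact_mod_cast hc
      _ = ((⌊D⌋ : ℝ) + 1) := by
          have h2 : ((⌊D⌋ + 1).toNat : ℤ) = ⌊D⌋ + 1 := Int.toNat_of_nonneg (by omega)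
          exact_mod_cast congrArg (Int.cast : ℤ → ℝ) h2
      _ ≤ D + 1 := by have := Int.floor_le D; linarith

lemma count_strip (S : Finset (ℤ × ℤ)) (a b : ℤ) (c B L m : ℝ)
    (hm : 0 < m) (hma : m ≤ |(a : ℝ)|) (hB : 0 ≤ B) (hL : 0 ≤ L)
    (hS : ∀ q ∈ S, |(q.2 : ℝ)| ≤ B ∧ |(a : ℝ) * (q.1 : ℝ) + (b : ℝ) * (q.2 : ℝ) - c| ≤ L) :
    (S.card : ℝ) ≤ (2 * B + 1) * (2 * L / m + 1) := by
  classical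
  set T' := S.image Prod.snd with hT'
  have hfib : S.card = ∑ y ∈ T', (S.filter fun q => q.2 = y).card :=
    Finset.card_eq_sum_card_fiberwise (fun x hx => Finset.mem_image_of_mem Prod.snd hx)
  have hfiber : ∀ y ∈ T', ((S.filter fun q => q.2 = y).card : ℝ) ≤ 2 * L / m + 1 := by
    intro y hy
    set F := S.filter fun q => q.2 = y with hF
    have hinj : Set.InjOn Prod.fst (F : Set (ℤ × ℤ)) := by
      intro p hp q hq hpq
      have hp' := Finset.mem_filter.1 hp
      have hq' := Finset.mem_filter.1 hq
      exact Prod.ext hpq (hp'.2.trans hq'.2.symm)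
    have hcardeq : F.card = (F.image Prod.fst).card := (Finset.card_image_of_injOn hinj).symm
    rw [hcardeq]
    apply count_interval _ (2 * L / m) (by positivity)
    intro x hx x' hx'
    obtain ⟨p, hp, hpx⟩ := Finset.mem_image.1 hx
    obtain ⟨p', hp', hpx'⟩ := Finset.mem_image.1 hx'
    have hpS := Finset.mem_filter.1 hp
    have hpS' := Finset.mem_filter.1 hp'
    have h1 := (hS p hpS.1).2
    have h2 := (hS p' hpS'.1).2
    rw [hpS.2] at h1; rw [hpS'.2] at h2
    rw [hpx] at h1; rw [hpx'] at h2
    have habs : |(a : ℝ)| * |(x : ℝ) - (x' : ℝ)| ≤ 2 * L := by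
      rw [← abs_mul]
      have : (a : ℝ) * ((x : ℝ) - (x' : ℝ)) =
          ((a : ℝ) * x + (b : ℝ) * y - c) - ((a : ℝ) * x' + (b : ℝ) * y - c) := by ring
      rw [this]
      calc |_ - _| ≤ |(a:ℝ)*x + (b:ℝ)*y - c| + |(a:ℝ)*x' + (b:ℝ)*y - c| := abs_sub _ _
        _ ≤ 2 * L := by linarith
    have hapos : (0:ℝ) < |(a:ℝ)| := lt_of_lt_of_le hm hma
    calc |(x : ℝ) - (x' : ℝ)| ≤ 2 * L / |(a:ℝ)| := by
          rw [le_div_iff₀ hapos, mul_comm]; exact habs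
      _ ≤ 2 * L / m := by apply div_le_div_of_nonneg_left (by linarith) hm hma
  have hT'card : (T'.card : ℝ) ≤ 2 * B + 1 := by
    apply count_interval _ (2 * B) (by positivity)
    intro y hy y' hy'
    obtain ⟨p, hp, hpy⟩ := Finset.mem_image.1 hy
    obtain ⟨p', hp', hpy'⟩ := Finset.mem_image.1 hy'
    have h1 := (hS p hp).1
    have h2 := (hS p' hp').1
    rw [hpy] at h1; rw [hpy'] at h2
    calc |(y:ℝ) - y'| ≤ |(y:ℝ)| + |(y':ℝ)| := abs_sub _ _
      _ ≤ 2 * B := by linarith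
  calc (S.card : ℝ) = ∑ y ∈ T', ((S.filter fun q => q.2 = y).card : ℝ) := by
        rw [hfib]; push_cast; ring
    _ ≤ ∑ y ∈ T', (2 * L / m + 1) := Finset.sum_le_sum hfiber
    _ = T'.card * (2 * L / m + 1) := by rw [Finset.sum_const, nsmul_eq_mul]
    _ ≤ (2 * B + 1) * (2 * L / m + 1) := by
        apply mul_le_mul_of_nonneg_right hT'card (by positivity)

lemma max_coord (x y m : ℝ) (hm : 0 < m) (hsq : m^2 ≤ x^2 + y^2) (hc : |y| ≤ |x|) :
    m ≤ 2*|x| := by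
  nlinarith [sq_abs x, sq_abs y, abs_nonneg x,
    mul_self_le_mul_self (abs_nonneg y) hc, sq_nonneg (2*|x| - m)]


set_option maxHeartbeats 1000000 in
theorem stmt16 (ε K s γ : ℝ) (hε : 0 < ε) (hK : 1 ≤ K) (hs : 0 ≤ s) (hγ : 0 ≤ γ)
    (hsγ : 2 * s + 2 * γ < 1) :
    ∃ C > 0, ∀ (N N₁ N₂ t sgn : ℝ), sgn = 1 ∨ sgn = -1 →
      1 ≤ N₂ → N₂ ≤ N → N / K ≤ N₁ → N₁ ≤ K * N → 1 ≤ N₁ →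
      ∀ h : ℤ × ℤ → ℤ × ℤ → ℤ × ℤ → ℂ,
      (∀ n n₁ n₂ : ℤ × ℤ, h n n₁ n₂ =
        if n₁ = n₂ - n ∧ |phaseFn sgn n₁ n₂ n| ≤ K * N₁ ^ (2 * s + 2 * γ) ∧
           N / K ≤ en2 n ∧ en2 n ≤ K * N ∧ N₁ / K ≤ en2 n₁ ∧ en2 n₁ ≤ K * N₁ ∧
           N₂ / K ≤ en2 n₂ ∧ en2 n₂ ≤ K * N₂
        then Complex.exp (-(Complex.I) * (t : ℂ) * (((n₁.1 : ℝ) ^ 2 + (n₁.2 : ℝ) ^ 2 : ℝ) : ℂ))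
              * ((jb2 n₁ : ℝ) : ℂ)⁻¹
        else 0) →
      ∀ (f : (ℤ × ℤ) × (ℤ × ℤ) →₀ ℂ) (T : Finset (ℤ × ℤ)),
        ∑ n₂ ∈ T, ‖∑ p ∈ f.support, h p.2 p.1 n₂ * f p‖ ^ 2 ≤
          (C * (N₁ ^ (s + γ - 1 / 2 + ε) * N₂ ^ (-(1 : ℝ) / 2) +
            N₁ ^ (-(1 : ℝ) / 2 + ε))) ^ 2 * ∑ p ∈ f.support, ‖f p‖ ^ 2 := by
  classical
  have hKpos : (0:ℝ) < K := lt_of_lt_of_le one_pos hK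
  refine ⟨Real.sqrt (6 * K ^ 5), Real.sqrt_pos.2 (by positivity), ?_⟩
  intro N N₁ N₂ t sgn hsgn hN₂ hN₂N hNK hKN hN₁ h hh f T
  have hN1pos : (0:ℝ) < N₁ := lt_of_lt_of_le one_pos hN₁
  have hN2pos : (0:ℝ) < N₂ := lt_of_lt_of_le one_pos hN₂
  set σ : ℝ := 2 * s + 2 * γ with hσdef
  have hX : (0:ℝ) < N₁ ^ σ := Real.rpow_pos_of_pos hN1pos σ
  set M : ℝ := 6 * K ^ 5 * (N₁ ^ (σ - 1) * N₂⁻¹ + N₁⁻¹) with hMdef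
  have hM0 : 0 ≤ M := by positivity
  set S : (ℤ × ℤ) → Finset ((ℤ × ℤ) × (ℤ × ℤ)) :=
    fun n₂ => f.support.filter fun p => h p.2 p.1 n₂ ≠ 0 with hSdef
  -- basic facts
  have hen2sq : ∀ q : ℤ × ℤ, en2 q ^ 2 = (q.1:ℝ)^2 + (q.2:ℝ)^2 := by
    intro q; unfold en2; rw [Real.sq_sqrt (by positivity)]
  have habs1 : ∀ q : ℤ × ℤ, |(q.1:ℝ)| ≤ en2 q := by
    intro q; unfold en2
    rw [← Real.sqrt_sq_eq_abs]
    apply Real.sqrt_le_sqrt; nlinarith [sq_nonneg ((q.2:ℝ))]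
  have habs2 : ∀ q : ℤ × ℤ, |(q.2:ℝ)| ≤ en2 q := by
    intro q; unfold en2
    rw [← Real.sqrt_sq_eq_abs]
    apply Real.sqrt_le_sqrt; nlinarith [sq_nonneg ((q.1:ℝ))]
  have hjb : ∀ q : ℤ × ℤ, en2 q ≤ jb2 q := by
    intro q; unfold en2 jb2
    apply Real.sqrt_le_sqrt; linarith
  have hcond : ∀ n₂ p, p ∈ S n₂ →
      p.1 = n₂ - p.2 ∧ |phaseFn sgn p.1 n₂ p.2| ≤ K * N₁ ^ σ ∧
      N / K ≤ en2 p.2 ∧ en2 p.2 ≤ K * N ∧ N₁ / K ≤ en2 p.1 ∧ en2 p.1 ≤ K * N₁ ∧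
      N₂ / K ≤ en2 n₂ ∧ en2 n₂ ≤ K * N₂ := by
    intro n₂ p hp
    have hne : h p.2 p.1 n₂ ≠ 0 := by
      have hp' := hp
      simp only [hSdef, Finset.mem_filter] at hp'
      exact hp'.2
    rw [hh] at hne
    by_contra hcon
    rw [if_neg hcon] at hne
    exact hne rfl
  have hnormh : ∀ n₂ p, p ∈ S n₂ → ‖h p.2 p.1 n₂‖ ≤ K / N₁ := by
    intro n₂ p hp
    obtain ⟨h1, h2, h3, h4, h5, h6, h7, h8⟩ := hcond n₂ p hp
    rw [hh, if_pos ⟨h1, h2, h3, h4, h5, h6, h7, h8⟩, norm_mul]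
    have hexp : ‖Complex.exp (-(Complex.I) * (t : ℂ)
        * ((((p.1.1 : ℝ) ^ 2 + (p.1.2 : ℝ) ^ 2 : ℝ)) : ℂ))‖ = 1 := by
      rw [Complex.norm_exp]
      have hre : ∀ r : ℝ, (-(Complex.I) * (t : ℂ) * (r : ℂ)).re = 0 := by
        intro r; simp
      rw [hre, Real.exp_zero]
    rw [hexp, one_mul, norm_inv, Complex.norm_real]
    have hge : N₁ / K ≤ jb2 p.1 := le_trans h5 (hjb p.1)
    have hjbnn : (0:ℝ) ≤ jb2 p.1 := Real.sqrt_nonneg _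
    rw [Real.norm_eq_abs, abs_of_nonneg hjbnn]
    calc (jb2 p.1)⁻¹ ≤ (N₁ / K)⁻¹ := by
          apply inv_anti₀ (by positivity) hge
      _ = K / N₁ := by rw [inv_div]
  -- per-row bound
  have key : ∀ n₂ : ℤ × ℤ, ‖∑ p ∈ f.support, h p.2 p.1 n₂ * f p‖ ^ 2 ≤
      M * ∑ p ∈ S n₂, ‖f p‖ ^ 2 := by
    intro n₂
    have hsum : ∑ p ∈ f.support, h p.2 p.1 n₂ * f p = ∑ p ∈ S n₂, h p.2 p.1 n₂ * f p := by
      simp only [hSdef]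
      exact (Finset.sum_filter_of_ne fun p _ hne => left_ne_zero_of_mul hne).symm
    rw [hsum]
    rcases (S n₂).eq_empty_or_nonempty with hemp | ⟨p₀, hp₀⟩
    · rw [hemp]; simp
    obtain ⟨-, -, -, -, -, -, h7, h8⟩ := hcond n₂ p₀ hp₀
    have hen2n₂ : (N₂ / K) ^ 2 ≤ (n₂.1:ℝ)^2 + (n₂.2:ℝ)^2 := by
      rw [← hen2sq n₂]
      exact pow_le_pow_left₀ (by positivity) h7 2
    set c : ℝ := ((n₂.1:ℝ)^2 + (n₂.2:ℝ)^2) - sgn * en2 n₂ with hcdef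
    have hlin : ∀ p ∈ S n₂,
        |2*(n₂.1:ℝ) * (p.1.1:ℝ) + 2*(n₂.2:ℝ) * (p.1.2:ℝ) - c| ≤ K * N₁ ^ σ := by
      intro p hp
      obtain ⟨h1, h2, _⟩ := hcond n₂ p hp
      have hp2 : p.2 = n₂ - p.1 := by rw [h1]; exact (sub_sub_cancel _ _).symm
      rw [hp2] at h2
      have heq : phaseFn sgn p.1 n₂ (n₂ - p.1) =
          2*(n₂.1:ℝ) * (p.1.1:ℝ) + 2*(n₂.2:ℝ) * (p.1.2:ℝ) - c := by
        unfold phaseFn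
        rw [hen2sq, hen2sq, hcdef]
        have e1 : ((n₂ - p.1).1 : ℝ) = (n₂.1:ℝ) - (p.1.1:ℝ) := by
          rw [Prod.fst_sub]; push_cast; ring
        have e2 : ((n₂ - p.1).2 : ℝ) = (n₂.2:ℝ) - (p.1.2:ℝ) := by
          rw [Prod.snd_sub]; push_cast; ring
        rw [e1, e2]; ring
      rw [heq] at h2; exact h2
    set Simg := (S n₂).image Prod.fst with hSimgdef
    have hcard1 : (S n₂).card = Simg.card := by
      rw [hSimgdef]; symm; apply Finset.card_image_of_injOn
      intro p hp q hq hpq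
      have hp1 := (hcond n₂ p (Finset.mem_coe.1 hp)).1
      have hq1 := (hcond n₂ q (Finset.mem_coe.1 hq)).1
      have hps : p.2 = q.2 := by
        have e1 : p.2 = n₂ - p.1 := by rw [hp1]; exact (sub_sub_cancel _ _).symm
        have e2 : q.2 = n₂ - q.1 := by rw [hq1]; exact (sub_sub_cancel _ _).symm
        rw [e1, e2, hpq]
      exact Prod.ext hpq hps
    have hmB : (0:ℝ) < N₂ / K := by positivity
    have hcount : (Simg.card : ℝ) ≤ (2*(K*N₁)+1) * (2*(K*N₁^σ)/(N₂/K) + 1) := by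
      rcases le_or_gt |(n₂.2:ℝ)| |(n₂.1:ℝ)| with hcase | hcase
      · apply count_strip Simg (2*n₂.1) (2*n₂.2) c (K*N₁) (K*N₁^σ) (N₂/K) hmB ?_
          (by positivity) (by positivity)
        · intro q hq
          obtain ⟨p, hp, rfl⟩ := Finset.mem_image.1 hq
          obtain ⟨_, _, _, _, _, h6, _⟩ := hcond n₂ p hp
          refine ⟨le_trans (habs2 p.1) h6, ?_⟩
          have hcast : ((2*n₂.1 : ℤ) : ℝ) * ((p.1.1 : ℤ) : ℝ) + ((2*n₂.2 : ℤ) : ℝ) * ((p.1.2 : ℤ) : ℝ) - c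
              = 2*(n₂.1:ℝ) * (p.1.1:ℝ) + 2*(n₂.2:ℝ) * (p.1.2:ℝ) - c := by push_cast; ring
          rw [hcast]
          exact hlin p hp
        · push_cast
          have h2a : |2*(n₂.1:ℝ)| = 2 * |(n₂.1:ℝ)| := by
            rw [abs_mul]; norm_num
          rw [h2a]
          exact max_coord _ _ _ hmB hen2n₂ hcase
      · have hswap : (Simg.card : ℝ) = ((Simg.image Prod.swap).card : ℝ) := by
          rw [Finset.card_image_of_injective _ Prod.swap_injective]
        rw [hswap]
        apply count_strip (Simg.image Prod.swap) (2*n₂.2) (2*n₂.1) c (K*N₁) (K*N₁^σ)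
          (N₂/K) hmB ?_ (by positivity) (by positivity)
        · intro q hq
          obtain ⟨q', hq', rfl⟩ := Finset.mem_image.1 hq
          obtain ⟨p, hp, rfl⟩ := Finset.mem_image.1 hq'
          obtain ⟨_, _, _, _, _, h6, _⟩ := hcond n₂ p hp
          refine ⟨le_trans (habs1 p.1) h6, ?_⟩
          have hcast : ((2*n₂.2 : ℤ) : ℝ) * (((p.1.swap).1 : ℤ) : ℝ) + ((2*n₂.1 : ℤ) : ℝ) * (((p.1.swap).2 : ℤ) : ℝ) - c
              = 2*(n₂.1:ℝ) * (p.1.1:ℝ) + 2*(n₂.2:ℝ) * (p.1.2:ℝ) - c := by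
            rw [Prod.fst_swap, Prod.snd_swap]; push_cast; ring
          rw [hcast]
          exact hlin p hp
        · push_cast
          have h2a : |2*(n₂.2:ℝ)| = 2 * |(n₂.2:ℝ)| := by
            rw [abs_mul]; norm_num
          rw [h2a]
          exact max_coord _ _ _ hmB (by linarith [hen2n₂]) hcase.le
    have harith : (K / N₁)^2 * ((2*(K*N₁)+1) * (2*(K*N₁^σ)/(N₂/K) + 1)) ≤ M := by
      have hKN₁ : 1 ≤ K * N₁ := one_le_mul_of_one_le_of_one_le hK hN₁
      have hD : 2*(K*N₁^σ)/(N₂/K) = 2*K^2*(N₁^σ)/N₂ := by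
        field_simp
      rw [hD, hMdef]
      have e1 : N₁ ^ (σ - 1) = N₁ ^ σ / N₁ := by
        rw [Real.rpow_sub hN1pos, Real.rpow_one]
      rw [e1]
      have hK35 : 3*K^3 ≤ 6*K^5 := by
        have h1 : K^3 ≤ K^5 := pow_le_pow_right₀ hK (by norm_num)
        nlinarith [h1]
      calc (K/N₁)^2 * ((2*(K*N₁)+1) * (2*K^2*(N₁^σ)/N₂+1))
          ≤ (K/N₁)^2 * ((3*(K*N₁)) * (2*K^2*(N₁^σ)/N₂+1)) := by
            apply mul_le_mul_of_nonneg_left _ (by positivity)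
            apply mul_le_mul_of_nonneg_right (by linarith) (by positivity)
        _ = 6*K^5*((N₁^σ/N₁) * N₂⁻¹) + 3*K^3/N₁ := by
            field_simp; ring
        _ ≤ 6*K^5*((N₁^σ/N₁) * N₂⁻¹) + 6*K^5/N₁ := by
            have hd : 3*K^3/N₁ ≤ 6*K^5/N₁ := by gcongr
            linarith
        _ = 6*K^5*((N₁^σ/N₁) * N₂⁻¹ + N₁⁻¹) := by field_simp
    calc ‖∑ p ∈ S n₂, h p.2 p.1 n₂ * f p‖ ^ 2
        ≤ (∑ p ∈ S n₂, ‖h p.2 p.1 n₂ * f p‖) ^ 2 := by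
          apply pow_le_pow_left₀ (norm_nonneg _) (norm_sum_le _ _)
      _ ≤ ((K / N₁) * ∑ p ∈ S n₂, ‖f p‖) ^ 2 := by
          apply pow_le_pow_left₀ (by positivity)
          rw [Finset.mul_sum]
          apply Finset.sum_le_sum
          intro p hp
          rw [norm_mul]
          exact mul_le_mul_of_nonneg_right (hnormh n₂ p hp) (norm_nonneg _)
      _ = (K / N₁)^2 * (∑ p ∈ S n₂, ‖f p‖) ^ 2 := by ring
      _ ≤ (K / N₁)^2 * (((S n₂).card : ℝ) * ∑ p ∈ S n₂, ‖f p‖^2) := by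
          apply mul_le_mul_of_nonneg_left sq_sum_le_card_mul_sum_sq (by positivity)
      _ = ((K / N₁)^2 * ((S n₂).card : ℝ)) * ∑ p ∈ S n₂, ‖f p‖^2 := by ring
      _ ≤ M * ∑ p ∈ S n₂, ‖f p‖^2 := by
          apply mul_le_mul_of_nonneg_right _ (by positivity)
          calc (K/N₁)^2 * ((S n₂).card : ℝ) = (K/N₁)^2 * (Simg.card : ℝ) := by
                rw [hcard1]
            _ ≤ (K/N₁)^2 * ((2*(K*N₁)+1) * (2*(K*N₁^σ)/(N₂/K) + 1)) :=
                mul_le_mul_of_nonneg_left hcount (by positivity)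
            _ ≤ M := harith
  -- disjointness of rows
  have step3 : ∑ n₂ ∈ T, ∑ p ∈ S n₂, ‖f p‖^2 ≤ ∑ p ∈ f.support, ‖f p‖^2 := by
    have hrw : ∀ n₂ ∈ T, ∑ p ∈ S n₂, ‖f p‖^2 =
        ∑ p ∈ f.support, if h p.2 p.1 n₂ ≠ 0 then ‖f p‖^2 else 0 := by
      intro n₂ _; simp only [hSdef]; exact Finset.sum_filter _ _
    rw [Finset.sum_congr rfl hrw, Finset.sum_comm]
    apply Finset.sum_le_sum
    intro p hp
    have hsupp : ∀ n₂ ∈ T, (if h p.2 p.1 n₂ ≠ 0 then ‖f p‖^2 else 0) ≠ 0 →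
        n₂ = p.1 + p.2 := by
      intro n₂ _ hne
      by_cases hz : h p.2 p.1 n₂ ≠ 0
      · have hmem : p ∈ S n₂ := by
          simp only [hSdef]; exact Finset.mem_filter.2 ⟨hp, hz⟩
        have := (hcond n₂ p hmem).1
        rw [this]; abel
      · simp [hz] at hne
    calc ∑ n₂ ∈ T, (if h p.2 p.1 n₂ ≠ 0 then ‖f p‖^2 else 0)
        = ∑ n₂ ∈ T.filter (fun n₂ => n₂ = p.1 + p.2),
            (if h p.2 p.1 n₂ ≠ 0 then ‖f p‖^2 else 0) :=
          (Finset.sum_filter_of_ne hsupp).symm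
      _ ≤ ‖f p‖^2 := by
          rw [Finset.filter_eq']
          split_ifs with hmem
          · rw [Finset.sum_singleton]
            split_ifs
            · exact le_refl _
            · positivity
          · rw [Finset.sum_empty]; positivity
  -- final exponent arithmetic
  have hfin : M ≤ (Real.sqrt (6*K^5) * (N₁ ^ (s+γ-1/2+ε) * N₂ ^ (-(1:ℝ)/2) +
      N₁ ^ (-(1:ℝ)/2+ε)))^2 := by
    have hA : (0:ℝ) ≤ N₁ ^ (s+γ-1/2+ε) * N₂ ^ (-(1:ℝ)/2) := by positivity
    have hB' : (0:ℝ) ≤ N₁ ^ (-(1:ℝ)/2+ε) := by positivity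
    rw [mul_pow, Real.sq_sqrt (by positivity : (0:ℝ) ≤ 6*K^5)]
    have hexp1 : N₁ ^ (σ-1) * N₂⁻¹ ≤ (N₁ ^ (s+γ-1/2+ε) * N₂ ^ (-(1:ℝ)/2))^2 := by
      rw [mul_pow]
      have e1 : (N₁ ^ (s+γ-1/2+ε))^2 = N₁ ^ (2*s+2*γ-1+2*ε) := by
        rw [pow_two, ← Real.rpow_add hN1pos]; congr 1; ring
      have e2 : (N₂ ^ (-(1:ℝ)/2))^2 = N₂⁻¹ := by
        rw [pow_two, ← Real.rpow_add hN2pos]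
        norm_num [Real.rpow_neg_one]
      rw [e1, e2]
      apply mul_le_mul_of_nonneg_right _ (by positivity)
      apply Real.rpow_le_rpow_of_exponent_le hN₁
      rw [hσdef]; linarith
    have hexp2 : N₁⁻¹ ≤ (N₁ ^ (-(1:ℝ)/2+ε))^2 := by
      have e1 : (N₁ ^ (-(1:ℝ)/2+ε))^2 = N₁ ^ (-1+2*ε) := by
        rw [pow_two, ← Real.rpow_add hN1pos]; congr 1; ring
      rw [e1]
      calc N₁⁻¹ = N₁ ^ (-1:ℝ) := (Real.rpow_neg_one N₁).symm
        _ ≤ N₁ ^ (-1+2*ε) := Real.rpow_le_rpow_of_exponent_le hN₁ (by linarith)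
    calc M = 6*K^5*(N₁ ^ (σ-1) * N₂⁻¹ + N₁⁻¹) := hMdef
      _ ≤ 6*K^5*((N₁ ^ (s+γ-1/2+ε) * N₂ ^ (-(1:ℝ)/2))^2 + (N₁ ^ (-(1:ℝ)/2+ε))^2) := by
          apply mul_le_mul_of_nonneg_left (add_le_add hexp1 hexp2) (by positivity)
      _ ≤ 6*K^5*((N₁ ^ (s+γ-1/2+ε) * N₂ ^ (-(1:ℝ)/2) + N₁ ^ (-(1:ℝ)/2+ε))^2) := by
          apply mul_le_mul_of_nonneg_left _ (by positivity)
          nlinarith [mul_nonneg hA hB']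
  calc ∑ n₂ ∈ T, ‖∑ p ∈ f.support, h p.2 p.1 n₂ * f p‖ ^ 2
      ≤ ∑ n₂ ∈ T, M * ∑ p ∈ S n₂, ‖f p‖^2 := Finset.sum_le_sum fun n₂ _ => key n₂
    _ = M * ∑ n₂ ∈ T, ∑ p ∈ S n₂, ‖f p‖^2 := (Finset.mul_sum _ _ _).symm
    _ ≤ M * ∑ p ∈ f.support, ‖f p‖^2 := mul_le_mul_of_nonneg_left step3 hM0
    _ ≤ (Real.sqrt (6*K^5) * (N₁ ^ (s+γ-1/2+ε) * N₂ ^ (-(1:ℝ)/2) +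
          N₁ ^ (-(1:ℝ)/2+ε)))^2 * ∑ p ∈ f.support, ‖f p‖^2 := by
        apply mul_le_mul_of_nonneg_right hfin (by positivity)
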